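/- arXiv:0901.1492 — 4 statements merged into one kernel-verified Lean document; each statement's English description precedes it below -/
import Mathlib

section
/- For all t with 0 ≤ t ≤ 1, the quantity (1-t) + t·h(1/10) - (1 - 4t/5) - (1-t)·h(1/3) - t·h(1/5) + (1 - 2t/5)·h(1/3) equals (3t/5)·(h(1/3) - (3/2)·h(1/9)), and in particular is nonnegative. -/
/-- Binary entropy function (base-2 logarithm). -/
noncomputable def binEnt (x : ℝ) : ℝ := -x * Real.logb 2 x - (1 - x) * Real.logb 2 (1 - x)

theorem stmt_1 (t : ℝ) (h0 : 0 ≤ t) (h1 : t ≤ 1) :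
    (1 - t) + t * binEnt (1/10) - (1 - 4*t/5) - (1 - t) * binEnt (1/3)
        - t * binEnt (1/5) + (1 - 2*t/5) * binEnt (1/3)
      = (3*t/5) * (binEnt (1/3) - (3/2) * binEnt (1/9)) ∧
    0 ≤ (1 - t) + t * binEnt (1/10) - (1 - 4*t/5) - (1 - t) * binEnt (1/3)
        - t * binEnt (1/5) + (1 - 2*t/5) * binEnt (1/3) := by
  have h2 : (0:ℝ) < Real.log 2 := Real.log_pos (by norm_num)
  have e10 : Real.log (1/10 : ℝ) = -(Real.log 2 + Real.log 5) := by
    rw [show (1/10:ℝ) = (10:ℝ)⁻¹ by norm_num, Real.log_inv,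
      show (10:ℝ) = 2*5 by norm_num, Real.log_mul (by norm_num) (by norm_num)]
  have e910 : Real.log (9/10 : ℝ) = 2 * Real.log 3 - (Real.log 2 + Real.log 5) := by
    rw [Real.log_div (by norm_num) (by norm_num), show (9:ℝ) = 3^2 by norm_num,
      Real.log_pow, show (10:ℝ) = 2*5 by norm_num,
      Real.log_mul (by norm_num) (by norm_num)]
    push_cast; ring
  have e5 : Real.log (1/5 : ℝ) = -Real.log 5 := by
    rw [show (1/5:ℝ) = (5:ℝ)⁻¹ by norm_num, Real.log_inv]
  have e45 : Real.log (4/5 : ℝ) = 2 * Real.log 2 - Real.log 5 := by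
    rw [Real.log_div (by norm_num) (by norm_num), show (4:ℝ) = 2^2 by norm_num,
      Real.log_pow]
    push_cast; ring
  have e3 : Real.log (1/3 : ℝ) = -Real.log 3 := by
    rw [show (1/3:ℝ) = (3:ℝ)⁻¹ by norm_num, Real.log_inv]
  have e23 : Real.log (2/3 : ℝ) = Real.log 2 - Real.log 3 := by
    rw [Real.log_div (by norm_num) (by norm_num)]
  have e9 : Real.log (1/9 : ℝ) = -(2 * Real.log 3) := by
    rw [show (1/9:ℝ) = (9:ℝ)⁻¹ by norm_num, Real.log_inv, show (9:ℝ) = 3^2 by norm_num,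
      Real.log_pow]
    push_cast; ring
  have e89 : Real.log (8/9 : ℝ) = 3 * Real.log 2 - 2 * Real.log 3 := by
    rw [Real.log_div (by norm_num) (by norm_num), show (8:ℝ) = 2^3 by norm_num,
      show (9:ℝ) = 3^2 by norm_num, Real.log_pow, Real.log_pow]
    push_cast; ring
  have key : (1 - t) + t * binEnt (1/10) - (1 - 4*t/5) - (1 - t) * binEnt (1/3)
        - t * binEnt (1/5) + (1 - 2*t/5) * binEnt (1/3)
      = t * (2 - (6/5) * (Real.log 3 / Real.log 2)) := by
    simp only [binEnt, Real.logb, show (1:ℝ) - 1/10 = 9/10 by norm_num,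
      show (1:ℝ) - 1/5 = 4/5 by norm_num, show (1:ℝ) - 1/3 = 2/3 by norm_num,
      e10, e910, e5, e45, e3, e23]
    field_simp
    ring
  have keyR : (3*t/5) * (binEnt (1/3) - (3/2) * binEnt (1/9))
      = t * (2 - (6/5) * (Real.log 3 / Real.log 2)) := by
    simp only [binEnt, Real.logb, show (1:ℝ) - 1/3 = 2/3 by norm_num,
      show (1:ℝ) - 1/9 = 8/9 by norm_num, e3, e23, e9, e89]
    field_simp
    ring
  have hlog : 3 * Real.log 3 ≤ 5 * Real.log 2 := by
    have h27 : Real.log 27 ≤ Real.log 32 := Real.log_le_log (by norm_num) (by norm_num)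
    rw [show (27:ℝ) = 3^3 by norm_num, show (32:ℝ) = 2^5 by norm_num,
      Real.log_pow, Real.log_pow] at h27
    push_cast at h27; linarith
  have hpos : 0 ≤ 2 - (6/5) * (Real.log 3 / Real.log 2) := by
    have hd : Real.log 3 / Real.log 2 ≤ 5/3 := by
      rw [div_le_iff₀ h2]; linarith
    linarith
  refine ⟨key.trans keyR.symm, ?_⟩
  rw [key]
  positivity
end

section
/- Suppose p₀₀, p₀₁, p₁₀, p₁₁ > 0 satisfy p₀₀/p₀₁ = (p₀₀ + p₁₀)/(p₀₁ + p₁₁/2) and p₀₀/p₁₀ = (p₀₀ + p₀₁)/√(p₁₀(p₁₀ + 2p₁₁)). Then p₀₁/p₀₀ = 2 and p₁₁/p₁₀ = 4. -/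
theorem stmt_2 (p00 p01 p10 p11 : ℝ)
    (h00 : 0 < p00) (h01 : 0 < p01) (h10 : 0 < p10) (h11 : 0 < p11)
    (heq1 : p00 / p01 = (p00 + p10) / (p01 + p11 / 2))
    (heq2 : p00 / p10 = (p00 + p01) / Real.sqrt (p10 * (p10 + 2 * p11))) :
    p01 / p00 = 2 ∧ p11 / p10 = 4 := by
  have harg : (0:ℝ) < p10 * (p10 + 2 * p11) := by positivity
  have hs : 0 < Real.sqrt (p10 * (p10 + 2 * p11)) := Real.sqrt_pos.mpr harg
  have hsq : Real.sqrt (p10 * (p10 + 2 * p11)) ^ 2 = p10 * (p10 + 2 * p11) :=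
    Real.sq_sqrt harg.le
  have e1 : p00 * p11 = 2 * p01 * p10 := by
    field_simp at heq1
    nlinarith [heq1]
  have e2 : p00 * Real.sqrt (p10 * (p10 + 2 * p11)) = p10 * (p00 + p01) := by
    rw [div_eq_div_iff h10.ne' hs.ne'] at heq2
    linarith [heq2]
  have e3 : p00 ^ 2 * (p10 * (p10 + 2 * p11)) = (p10 * (p00 + p01)) ^ 2 := by
    calc p00 ^ 2 * (p10 * (p10 + 2 * p11))
        = (p00 * Real.sqrt (p10 * (p10 + 2 * p11))) ^ 2 := by rw [mul_pow, hsq]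
      _ = (p10 * (p00 + p01)) ^ 2 := by rw [e2]
  have key : p10 ^ 2 * (p01 * (p01 - 2 * p00)) = 0 := by nlinarith [e3, e1, mul_pos h00 h10]
  have h2 : p01 * (p01 - 2 * p00) = 0 := by
    rcases mul_eq_zero.mp key with h | h
    · exact absurd h (pow_ne_zero 2 h10.ne')
    · exact h
  have hp01 : p01 = 2 * p00 := by
    rcases mul_eq_zero.mp h2 with h | h
    · exact absurd h h01.ne'
    · linarith
  have hp11 : p11 = 4 * p10 := by
    have := e1
    rw [hp01] at this
    nlinarith [this, h00]
  constructor
  · rw [hp01]; field_simp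
  · rw [hp11]; field_simp
end

section
/- Let p₀₁, p₁₀, p₁₁ > 0. Then it is not the case that for all reals L₀₁, L₁₀ with p₀₁·L₀₁ + p₁₀·L₁₀ = 0 we have p₀₁·L₀₁² + p₁₀·L₁₀² ≥ p₀₁·L₀₁² + (1/2)·p₁₀·L₁₀² + (1/2)·(p₁₀²/(p₁₀+2p₁₁))·L₁₀² + p₁₀·L₁₀² + (p₀₁²/(p₀₁+p₁₁/2))·L₀₁². In fact there is a choice of (L₀₁, L₁₀) ≠ (0,0) with p₀₁·L₀₁ + p₁₀·L₁₀ = 0 violating the inequality. -/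
theorem stmt_6 (p01 p10 p11 : ℝ) (h01 : 0 < p01) (h10 : 0 < p10) (h11 : 0 < p11) :
    ∃ L01 L10 : ℝ, (L01, L10) ≠ (0, 0) ∧ p01 * L01 + p10 * L10 = 0 ∧
      ¬ (p01 * L01 ^ 2 + p10 * L10 ^ 2 ≥
          p01 * L01 ^ 2 + (1/2) * p10 * L10 ^ 2
            + (1/2) * (p10 ^ 2 / (p10 + 2 * p11)) * L10 ^ 2
            + p10 * L10 ^ 2 + (p01 ^ 2 / (p01 + p11 / 2)) * L01 ^ 2) := by
  refine ⟨-p10 / p01, 1, ?_, ?_, ?_⟩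
  · simp [Prod.ext_iff]
  · field_simp; ring
  · push_neg
    have h1 : 0 ≤ p10 ^ 2 / (p10 + 2 * p11) := by positivity
    have h2 : 0 ≤ p01 ^ 2 / (p01 + p11 / 2) * (-p10 / p01) ^ 2 := by positivity
    nlinarith
end

section
/- Suppose p₀₀, p₀₁, p₁₀, p₁₁ > 0 sum to 1 and for all a, b, c, d ≥ 0 the inequality 0 ≤ ((a-c)/2)·log(p₀₀/(p₀₀+2p₀₁)) + ((d-b)/2)·log(p₁₁/(p₁₁+2p₁₀)) + ((b-a)/2)·log(p₁₀/(p₁₀+2p₀₀)) + ((c-d)/2)·log(p₀₁/(p₀₁+2p₁₁)) holds. Then p₀₀ = p₀₁ = p₁₀ = p₁₁ = 1/4. -/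
lemma logb2_inj {x y : ℝ} (hx : 0 < x) (hy : 0 < y)
    (h : Real.logb 2 x = Real.logb 2 y) : x = y := by
  have h2 : (1:ℝ) < 2 := one_lt_two
  calc x = (2:ℝ) ^ Real.logb 2 x := (Real.rpow_logb two_pos (by norm_num) hx).symm
    _ = (2:ℝ) ^ Real.logb 2 y := by rw [h]
    _ = y := Real.rpow_logb two_pos (by norm_num) hy

theorem stmt_9 (p00 p01 p10 p11 : ℝ)
    (h00 : 0 < p00) (h01 : 0 < p01) (h10 : 0 < p10) (h11 : 0 < p11)
    (hsum : p00 + p01 + p10 + p11 = 1)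
    (hineq : ∀ a b c d : ℝ, 0 ≤ a → 0 ≤ b → 0 ≤ c → 0 ≤ d →
      0 ≤ ((a - c) / 2) * Real.logb 2 (p00 / (p00 + 2 * p01))
        + ((d - b) / 2) * Real.logb 2 (p11 / (p11 + 2 * p10))
        + ((b - a) / 2) * Real.logb 2 (p10 / (p10 + 2 * p00))
        + ((c - d) / 2) * Real.logb 2 (p01 / (p01 + 2 * p11))) :
    p00 = 1/4 ∧ p01 = 1/4 ∧ p10 = 1/4 ∧ p11 = 1/4 := by
  set L1 := Real.logb 2 (p00 / (p00 + 2 * p01)) with hL1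
  set L2 := Real.logb 2 (p11 / (p11 + 2 * p10)) with hL2
  set L3 := Real.logb 2 (p10 / (p10 + 2 * p00)) with hL3
  set L4 := Real.logb 2 (p01 / (p01 + 2 * p11)) with hL4
  have hA := hineq 1 0 0 0 (by norm_num) le_rfl le_rfl le_rfl
  have hB := hineq 0 1 0 0 le_rfl (by norm_num) le_rfl le_rfl
  have hC := hineq 0 0 1 0 le_rfl le_rfl (by norm_num) le_rfl
  have hD := hineq 0 0 0 1 le_rfl le_rfl le_rfl (by norm_num)
  have e13 : L1 = L3 := by linarith
  have e14 : L1 = L4 := by linarith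
  have e12 : L1 = L2 := by linarith
  have d00 : 0 < p00 + 2 * p01 := by linarith
  have d11 : 0 < p11 + 2 * p10 := by linarith
  have d10 : 0 < p10 + 2 * p00 := by linarith
  have d01 : 0 < p01 + 2 * p11 := by linarith
  have r13 : p00 / (p00 + 2 * p01) = p10 / (p10 + 2 * p00) :=
    logb2_inj (div_pos h00 d00) (div_pos h10 d10) e13
  have r14 : p00 / (p00 + 2 * p01) = p01 / (p01 + 2 * p11) :=
    logb2_inj (div_pos h00 d00) (div_pos h01 d01) e14
  have r12 : p00 / (p00 + 2 * p01) = p11 / (p11 + 2 * p10) :=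
    logb2_inj (div_pos h00 d00) (div_pos h11 d11) e12
  rw [div_eq_div_iff d00.ne' d10.ne'] at r13
  rw [div_eq_div_iff d00.ne' d01.ne'] at r14
  rw [div_eq_div_iff d00.ne' d11.ne'] at r12
  -- r13: p00*(p10+2p00) = p10*(p00+2p01)  → p00² = p01 p10
  -- r14: p00*(p01+2p11) = p01*(p00+2p01)  → p00 p11 = p01²
  -- r12: p00*(p11+2p10) = p11*(p00+2p01)  → p00 p10 = p11 p01
  have q1 : p00 ^ 2 = p01 * p10 := by linear_combination r13 / 2
  have q2 : p00 * p11 = p01 ^ 2 := by linear_combination r14 / 2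
  have q3 : p00 * p10 = p11 * p01 := by linear_combination r12 / 2
  have e4 : p00 ^ 4 = p01 ^ 4 := by
    linear_combination p00 ^ 2 * q1 + p00 * p01 * q3 + p01 ^ 2 * q2
  have e1 : p00 = p01 := by
    rcases lt_trichotomy p00 p01 with h | h | h
    · exact absurd e4 (ne_of_lt (pow_lt_pow_left₀ h h00.le (by norm_num)))
    · exact h
    · exact absurd e4.symm (ne_of_lt (pow_lt_pow_left₀ h h01.le (by norm_num)))
  have e2 : p00 = p10 := by
    have : p00 * p00 = p00 * p10 := by linear_combination q1 - p10 * e1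
    exact mul_left_cancel₀ h00.ne' this
  have e3 : p00 = p11 := by
    have : p00 * p11 = p00 * p00 := by linear_combination q2 - (p00 + p01) * e1
    exact (mul_left_cancel₀ h00.ne' this).symm
  refine ⟨by linarith, by linarith, by linarith, by linarith⟩
end
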